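/- Let Γ be an m-regular graph, u an eigenvector of Γ with eigenvalue θ taking exactly three values a₀, a₁, a₂, with associated partition {C⁰, C¹, C²}. Suppose there are no edges between C⁰ and C², and every vertex of C¹ is adjacent to exactly β₁ vertices of C². Then: every vertex of C⁰ has the same number of neighbors in C¹; every vertex of C¹ has the same number of neighbors in C⁰ and the same number in C¹; and every vertex of C² has the same number of neighbors in C¹. In particular C⁰ is a completely regular code in Γ. -/
import Mathlib


/-- In an `m`-regular graph, let `u` be an eigenvector with eigenvalue `θ`
taking exactly three values `a₀, a₁, a₂` with level sets `C⁰, C¹, C²`. If there are no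
edges between `C⁰` and `C²` and every vertex of `C¹` has exactly `β₁` neighbors in `C²`,
then each vertex of `C⁰` has a constant number of neighbors in `C¹`, each vertex of `C¹`
has constant numbers of neighbors in `C⁰` and in `C¹`, and each vertex of `C²` has a
constant number of neighbors in `C¹`; in particular `C⁰` is completely regular. -/
theorem stmt1 {V : Type*} [Fintype V] (G : SimpleGraph V) (m : ℕ)
    (hreg : ∀ v : V, {w | G.Adj v w}.ncard = m)
    (θ a₀ a₁ a₂ : ℝ) (h01 : a₀ ≠ a₁) (h02 : a₀ ≠ a₂) (h12 : a₁ ≠ a₂)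
    (u : V → ℝ)
    (heig : ∀ v : V, ∑ᶠ w ∈ {w | G.Adj v w}, u w = θ * u v)
    (hval : ∀ v : V, u v = a₀ ∨ u v = a₁ ∨ u v = a₂)
    (h0 : ∃ v, u v = a₀) (h1 : ∃ v, u v = a₁) (h2 : ∃ v, u v = a₂)
    (hnoedge : ∀ v w : V, u v = a₀ → u w = a₂ → ¬ G.Adj v w)
    (β₁ : ℕ)
    (hβ₁ : ∀ v : V, u v = a₁ → {w | G.Adj v w ∧ u w = a₂}.ncard = β₁) :
    (∃ β₀ : ℕ, ∀ v : V, u v = a₀ → {w | G.Adj v w ∧ u w = a₁}.ncard = β₀) ∧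
    (∃ γ₁ : ℕ, ∀ v : V, u v = a₁ → {w | G.Adj v w ∧ u w = a₀}.ncard = γ₁) ∧
    (∃ α₁ : ℕ, ∀ v : V, u v = a₁ → {w | G.Adj v w ∧ u w = a₁}.ncard = α₁) ∧
    (∃ γ₂ : ℕ, ∀ v : V, u v = a₂ → {w | G.Adj v w ∧ u w = a₁}.ncard = γ₂) := by
  classical
  set n : ℝ → V → ℕ := fun a v => {w | G.Adj v w ∧ u w = a}.ncard with hn
  have counts : ∀ v : V,
      ((n a₀ v : ℝ) + n a₁ v + n a₂ v = m) ∧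
      (a₀ * n a₀ v + a₁ * n a₁ v + a₂ * n a₂ v = θ * u v) := by
    intro v
    set N : Finset V := Finset.univ.filter (fun w => G.Adj v w) with hN
    have hNset : {w | G.Adj v w} = ↑N := by ext w; simp [hN]
    have hcard : ∀ a : ℝ, n a v = (N.filter (fun w => u w = a)).card := by
      intro a
      have : {w | G.Adj v w ∧ u w = a} = ↑(N.filter (fun w => u w = a)) := by
        ext w; simp [hN]
      simp only [hn, this, Set.ncard_coe_finset]
    set N0 := N.filter (fun w => u w = a₀) with hN0
    set N1 := N.filter (fun w => u w = a₁) with hN1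
    set N2 := N.filter (fun w => u w = a₂) with hN2
    have hd12 : Disjoint N1 N2 := by
      rw [Finset.disjoint_left]
      intro w hw1 hw2
      rw [hN1, Finset.mem_filter] at hw1
      rw [hN2, Finset.mem_filter] at hw2
      exact h12 (hw1.2.symm.trans hw2.2)
    have hd012 : Disjoint N0 (N1 ∪ N2) := by
      rw [Finset.disjoint_left]
      intro w hw0 hw
      rw [hN0, Finset.mem_filter] at hw0
      rcases Finset.mem_union.mp hw with hw1 | hw2
      · rw [hN1, Finset.mem_filter] at hw1
        exact h01 (hw0.2.symm.trans hw1.2)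
      · rw [hN2, Finset.mem_filter] at hw2
        exact h02 (hw0.2.symm.trans hw2.2)
    have hU : N = N0 ∪ (N1 ∪ N2) := by
      ext w
      simp only [hN0, hN1, hN2, Finset.mem_union, Finset.mem_filter]
      constructor
      · intro hw
        rcases hval w with h | h | h
        · exact Or.inl ⟨hw, h⟩
        · exact Or.inr (Or.inl ⟨hw, h⟩)
        · exact Or.inr (Or.inr ⟨hw, h⟩)
      · rintro (⟨hw, _⟩ | ⟨hw, _⟩ | ⟨hw, _⟩) <;> exact hw
    have hNcard : N.card = m := by
      have := hreg v
      rwa [hNset, Set.ncard_coe_finset] at this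
    have hcardsum : N0.card + (N1.card + N2.card) = m := by
      rw [← Finset.card_union_of_disjoint hd12, ← Finset.card_union_of_disjoint hd012, ← hU,
        hNcard]
    have hsumconst : ∀ a : ℝ, ∑ w ∈ N.filter (fun w => u w = a), u w
        = a * (N.filter (fun w => u w = a)).card := by
      intro a
      rw [Finset.sum_congr rfl (fun w hw => (Finset.mem_filter.mp hw).2),
        Finset.sum_const, nsmul_eq_mul, mul_comm]
    have hsum : a₀ * N0.card + a₁ * N1.card + a₂ * N2.card = θ * u v := by
      have := heig v
      rw [hNset, finsum_mem_coe_finset, hU, Finset.sum_union hd012,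
        Finset.sum_union hd12] at this
      have s0 : ∑ x ∈ N0, u x = a₀ * N0.card := by rw [hN0]; exact hsumconst a₀
      have s1 : ∑ x ∈ N1, u x = a₁ * N1.card := by rw [hN1]; exact hsumconst a₁
      have s2 : ∑ x ∈ N2, u x = a₂ * N2.card := by rw [hN2]; exact hsumconst a₂
      linarith
    refine ⟨?_, ?_⟩
    · rw [hcard a₀, hcard a₁, hcard a₂, ← hN0, ← hN1, ← hN2]
      norm_cast
      omega
    · rw [hcard a₀, hcard a₁, hcard a₂, ← hN0, ← hN1, ← hN2]
      linarith [hsum]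
  -- vanishing counts
  have hz0 : ∀ v : V, u v = a₀ → n a₂ v = 0 := by
    intro v hv
    have : {w | G.Adj v w ∧ u w = a₂} = ∅ := by
      ext w
      simp only [Set.mem_setOf_eq, Set.mem_empty_iff_false, iff_false, not_and]
      intro hadj hw
      exact hnoedge v w hv hw hadj
    simp [hn, this]
  have hz2 : ∀ v : V, u v = a₂ → n a₀ v = 0 := by
    intro v hv
    have : {w | G.Adj v w ∧ u w = a₀} = ∅ := by
      ext w
      simp only [Set.mem_setOf_eq, Set.mem_empty_iff_false, iff_false, not_and]
      intro hadj hw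
      exact hnoedge w v hw hv hadj.symm
    simp [hn, this]
  have hb1 : ∀ v : V, u v = a₁ → n a₂ v = β₁ := fun v hv => hβ₁ v hv
  obtain ⟨v₀, hv₀⟩ := h0
  obtain ⟨v₁, hv₁⟩ := h1
  obtain ⟨v₂, hv₂⟩ := h2
  have hne01 : (a₁ - a₀) ≠ 0 := sub_ne_zero.mpr (Ne.symm h01)
  have hne12 : (a₁ - a₂) ≠ 0 := sub_ne_zero.mpr h12
  refine ⟨⟨n a₁ v₀, ?_⟩, ⟨n a₀ v₁, ?_⟩, ⟨n a₁ v₁, ?_⟩, ⟨n a₁ v₂, ?_⟩⟩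
  · intro v hv
    obtain ⟨e1, e2⟩ := counts v
    obtain ⟨f1, f2⟩ := counts v₀
    rw [hv] at e2; rw [hv₀] at f2
    have z : ((n a₂ v : ℕ) : ℝ) = 0 := by rw [hz0 v hv]; norm_num
    have z' : ((n a₂ v₀ : ℕ) : ℝ) = 0 := by rw [hz0 v₀ hv₀]; norm_num
    have key : (a₁ - a₀) * (n a₁ v : ℝ) = (a₁ - a₀) * (n a₁ v₀ : ℝ) := by
      linear_combination e2 - f2 - a₀ * e1 + a₀ * f1 + (a₀ - a₂) * z + (a₂ - a₀) * z'
    exact_mod_cast mul_left_cancel₀ hne01 key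
  · intro v hv
    obtain ⟨e1, e2⟩ := counts v
    obtain ⟨f1, f2⟩ := counts v₁
    rw [hv] at e2; rw [hv₁] at f2
    have z : ((n a₂ v : ℕ) : ℝ) = β₁ := by rw [hb1 v hv]
    have z' : ((n a₂ v₁ : ℕ) : ℝ) = β₁ := by rw [hb1 v₁ hv₁]
    have key : (a₁ - a₀) * (n a₁ v : ℝ) = (a₁ - a₀) * (n a₁ v₁ : ℝ) := by
      linear_combination e2 - f2 - a₀ * e1 + a₀ * f1 + (a₀ - a₂) * z + (a₂ - a₀) * z'
    have h1eq : (n a₁ v : ℝ) = (n a₁ v₁ : ℝ) := mul_left_cancel₀ hne01 key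
    have : (n a₀ v : ℝ) = (n a₀ v₁ : ℝ) := by linarith
    exact_mod_cast this
  · intro v hv
    obtain ⟨e1, e2⟩ := counts v
    obtain ⟨f1, f2⟩ := counts v₁
    rw [hv] at e2; rw [hv₁] at f2
    have z : ((n a₂ v : ℕ) : ℝ) = β₁ := by rw [hb1 v hv]
    have z' : ((n a₂ v₁ : ℕ) : ℝ) = β₁ := by rw [hb1 v₁ hv₁]
    have key : (a₁ - a₀) * (n a₁ v : ℝ) = (a₁ - a₀) * (n a₁ v₁ : ℝ) := by
      linear_combination e2 - f2 - a₀ * e1 + a₀ * f1 + (a₀ - a₂) * z + (a₂ - a₀) * z'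
    exact_mod_cast mul_left_cancel₀ hne01 key
  · intro v hv
    obtain ⟨e1, e2⟩ := counts v
    obtain ⟨f1, f2⟩ := counts v₂
    rw [hv] at e2; rw [hv₂] at f2
    have z : ((n a₀ v : ℕ) : ℝ) = 0 := by rw [hz2 v hv]; norm_num
    have z' : ((n a₀ v₂ : ℕ) : ℝ) = 0 := by rw [hz2 v₂ hv₂]; norm_num
    have key : (a₁ - a₂) * (n a₁ v : ℝ) = (a₁ - a₂) * (n a₁ v₂ : ℝ) := by
      linear_combination e2 - f2 - a₂ * e1 + a₂ * f1 + (a₂ - a₀) * z + (a₀ - a₂) * z'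
    exact_mod_cast mul_left_cancel₀ hne12 key
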